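/- Joining the UBCS scheme is Pareto-improving compared with the user equilibrium without policy intervention: if T_UE is a real number with T_UE ≥ Σ_{h=1}^{n} ρ_h·T_h, then for every path i and every real β with β_{i−1} ≤ β ≤ β_i we have T_i·β + P_i ≤ T_UE·β. (Second part of Theorem 2; T_UE is the common travel time of all users at user equilibrium.) -/

import Mathlib

open Finset

lemma ubcs_tele (T : ℕ → ℝ) (a c : ℕ) (hac : a ≤ c) :
    ∑ g ∈ Icc (a+1) c, (T (g-1) - T g) = T a - T c := by
  induction c, hac using Nat.le_induction with
  | base => simp
  | succ c hc ih =>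
    rw [Finset.sum_Icc_succ_top (by omega : a+1 ≤ c+1)]
    simp only [Nat.add_sub_cancel]
    rw [ih]; ring

/-- Second part of Theorem 2: joining the UBCS scheme is Pareto-improving compared with
the user equilibrium without policy intervention. -/
theorem ubcs_pareto_vs_ue
    (n : ℕ) (hn : 1 ≤ n)
    (T β ρ P : ℕ → ℝ)
    (hT : ∀ i j, 1 ≤ i → i ≤ j → j ≤ n → T j ≤ T i)
    (hβ0 : 0 ≤ β 0)
    (hβ : ∀ i j, i ≤ j → j ≤ n → β i ≤ β j)
    (hρ : ∀ i, 1 ≤ i → i ≤ n → 0 ≤ ρ i)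
    (hρ1 : ∑ h ∈ Icc 1 n, ρ h = 1)
    (hP : ∀ i, 1 ≤ i → i ≤ n →
      P i = ∑ h ∈ Icc 1 (i - 1), ρ h * ∑ g ∈ Icc (h + 1) i, (T (g - 1) - T g) * β (g - 1)
          - ∑ h ∈ Icc (i + 1) n, ρ h * ∑ g ∈ Icc (i + 1) h, (T (g - 1) - T g) * β (g - 1))
    (TUE : ℝ) (hTUE : ∑ h ∈ Icc 1 n, ρ h * T h ≤ TUE) :
    ∀ i, 1 ≤ i → i ≤ n → ∀ b : ℝ, β (i - 1) ≤ b → b ≤ β i →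
      T i * b + P i ≤ TUE * b := by
  intro i hi1 hin b hbl hbr
  have hb0 : 0 ≤ b := hβ0.trans ((hβ 0 (i-1) (Nat.zero_le _) (by omega)).trans hbl)
  -- termwise bounds
  have h1 : ∀ h ∈ Icc 1 (i-1),
      ρ h * ∑ g ∈ Icc (h+1) i, (T (g-1) - T g) * β (g-1) ≤ ρ h * ((T h - T i) * b) := by
    intro h hh
    simp only [mem_Icc] at hh
    apply mul_le_mul_of_nonneg_left _ (hρ h hh.1 (by omega))
    calc ∑ g ∈ Icc (h+1) i, (T (g-1) - T g) * β (g-1)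
        ≤ ∑ g ∈ Icc (h+1) i, (T (g-1) - T g) * b := by
          apply Finset.sum_le_sum
          intro g hg
          simp only [mem_Icc] at hg
          have hTg : 0 ≤ T (g-1) - T g :=
            sub_nonneg.2 (hT (g-1) g (by omega) (by omega) (by omega))
          have hβg : β (g-1) ≤ b :=
            le_trans (hβ (g-1) (i-1) (by omega) (by omega)) hbl
          exact mul_le_mul_of_nonneg_left hβg hTg
      _ = (T h - T i) * b := by
          rw [← Finset.sum_mul, ubcs_tele T h i (by omega)]
  have h2 : ∀ h ∈ Icc (i+1) n,
      ρ h * ((T i - T h) * b) ≤ ρ h * ∑ g ∈ Icc (i+1) h, (T (g-1) - T g) * β (g-1) := by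
    intro h hh
    simp only [mem_Icc] at hh
    apply mul_le_mul_of_nonneg_left _ (hρ h (by omega) hh.2)
    calc (T i - T h) * b = ∑ g ∈ Icc (i+1) h, (T (g-1) - T g) * b := by
          rw [← Finset.sum_mul, ubcs_tele T i h (by omega)]
      _ ≤ ∑ g ∈ Icc (i+1) h, (T (g-1) - T g) * β (g-1) := by
          apply Finset.sum_le_sum
          intro g hg
          simp only [mem_Icc] at hg
          have hTg : 0 ≤ T (g-1) - T g :=
            sub_nonneg.2 (hT (g-1) g (by omega) (by omega) (by omega))
          have hβg : b ≤ β (g-1) :=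
            hbr.trans (hβ i (g-1) (by omega) (by omega))
          exact mul_le_mul_of_nonneg_left hβg hTg
  have hA := Finset.sum_le_sum h1
  have hB := Finset.sum_le_sum h2
  -- splitting of the comparison sum
  have hsplit : ∑ h ∈ Icc 1 n, ρ h * ((T h - T i) * b)
      = ∑ h ∈ Icc 1 (i-1), ρ h * ((T h - T i) * b)
        + ∑ h ∈ Icc (i+1) n, ρ h * ((T h - T i) * b) := by
    have e1 : (Icc 1 n : Finset ℕ) = Ioc 0 n := by
      rw [← Finset.Icc_add_one_left_eq_Ioc, zero_add]
    have e2 : (Icc 1 (i-1) : Finset ℕ) = Ioc 0 (i-1) := by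
      rw [← Finset.Icc_add_one_left_eq_Ioc, zero_add]
    have e3 : (Icc (i+1) n : Finset ℕ) = Ioc i n := by
      rw [← Finset.Icc_add_one_left_eq_Ioc]
    rw [e1, e2, e3]
    rw [← Finset.sum_Ioc_consecutive _ (Nat.zero_le i) hin,
        ← Finset.sum_Ioc_consecutive _ (Nat.zero_le (i-1)) (by omega : i-1 ≤ i)]
    have e5 : (Ioc (i-1) i : Finset ℕ) = {i} := by
      rw [← Finset.Icc_add_one_left_eq_Ioc,
          (by omega : i - 1 + 1 = i), Finset.Icc_self]
    rw [e5, Finset.sum_singleton]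
    ring
  have hneg : ∑ h ∈ Icc (i+1) n, ρ h * ((T i - T h) * b)
      = -∑ h ∈ Icc (i+1) n, ρ h * ((T h - T i) * b) := by
    rw [← Finset.sum_neg_distrib]
    exact Finset.sum_congr rfl (fun h _ => by ring)
  have key : P i ≤ ∑ h ∈ Icc 1 n, ρ h * ((T h - T i) * b) := by
    rw [hP i hi1 hin, hsplit]
    rw [hneg] at hB
    linarith
  have hfin : ∑ h ∈ Icc 1 n, ρ h * ((T h - T i) * b)
      = (∑ h ∈ Icc 1 n, ρ h * T h) * b - T i * b := by
    calc ∑ h ∈ Icc 1 n, ρ h * ((T h - T i) * b)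
        = ∑ h ∈ Icc 1 n, (ρ h * T h * b - ρ h * (T i * b)) :=
          Finset.sum_congr rfl (fun h _ => by ring)
      _ = (∑ h ∈ Icc 1 n, ρ h * T h) * b - (∑ h ∈ Icc 1 n, ρ h) * (T i * b) := by
          rw [Finset.sum_sub_distrib, Finset.sum_mul, Finset.sum_mul]
      _ = (∑ h ∈ Icc 1 n, ρ h * T h) * b - T i * b := by rw [hρ1]; ring
  have hlast : (∑ h ∈ Icc 1 n, ρ h * T h) * b ≤ TUE * b :=
    mul_le_mul_of_nonneg_right hTUE hb0
  linarith
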